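/- Let Y be a compact metric space, φ: Y → Y continuous, g: Y → ℝ continuous and bounded by M, and suppose there are disjoint open sets U_p ∋ p, U_q ∋ q, a constant δ > 0, and N ∈ ℕ with: g > δ on U_p, g < −δ on U_q, φ(U_q) ⊂ U_q, and φ^N(Y ∖ U_p) ⊂ U_q. Define gₙ(z) = Σ_{k=0}^{n−1} g(φᵏ(z)). Then for all sufficiently large n, every z with gₙ(z) = 0 satisfies z ∈ U_p. -/

import Mathlib

open Function Set

/-- First half of the main technical lemma: if `gₙ(z) = 0` for large `n`,
then `z ∈ U_p`. -/
theorem stmt_8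
    {Y : Type*} [MetricSpace Y] [CompactSpace Y]
    (φ : Y → Y) (hφ : Continuous φ)
    (g : Y → ℝ) (hg : Continuous g)
    (M : ℝ) (hM : ∀ z, |g z| ≤ M)
    (p q : Y) (Up Uq : Set Y)
    (hUpo : IsOpen Up) (hUqo : IsOpen Uq) (hdisj : Disjoint Up Uq)
    (hp : p ∈ Up) (hq : q ∈ Uq)
    (δ : ℝ) (hδ : 0 < δ)
    (hgp : ∀ z ∈ Up, δ < g z) (hgq : ∀ z ∈ Uq, g z < -δ)
    (hinv : MapsTo φ Uq Uq)
    (N : ℕ) (hN : ∀ z, z ∉ Up → φ^[N] z ∈ Uq) :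
    ∃ n₀ : ℕ, ∀ n ≥ n₀, ∀ z : Y,
      (∑ k ∈ Finset.range n, g (φ^[k] z)) = 0 → z ∈ Up := by
  have hM0 : 0 ≤ M := le_trans (abs_nonneg _) (hM q)
  refine ⟨N + Nat.ceil (N * M / δ) + 1, fun n hn z hz => ?_⟩
  by_contra hzp
  have hNn : N < n := by omega
  have hmem : ∀ k, N ≤ k → φ^[k] z ∈ Uq := by
    intro k hk
    induction k, hk using Nat.le_induction with
    | base => exact hN z hzp
    | succ k hk ih =>
      rw [Function.iterate_succ_apply']
      exact hinv ih
  have hsplit : (∑ k ∈ Finset.range n, g (φ^[k] z))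
      = (∑ k ∈ Finset.range N, g (φ^[k] z)) + ∑ k ∈ Finset.Ico N n, g (φ^[k] z) := by
    rw [Finset.range_eq_Ico, Finset.range_eq_Ico]
    exact (Finset.sum_Ico_consecutive (fun k => g (φ^[k] z)) (Nat.zero_le N) hNn.le).symm
  have h1 : (∑ k ∈ Finset.range N, g (φ^[k] z)) ≤ N * M := by
    calc (∑ k ∈ Finset.range N, g (φ^[k] z)) ≤ ∑ k ∈ Finset.range N, M :=
          Finset.sum_le_sum fun k _ => le_trans (le_abs_self _) (hM _)
      _ = N * M := by rw [Finset.sum_const, Finset.card_range, nsmul_eq_mul]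
  have h2 : (∑ k ∈ Finset.Ico N n, g (φ^[k] z)) < ∑ k ∈ Finset.Ico N n, (-δ) := by
    refine Finset.sum_lt_sum_of_nonempty ?_ fun k hk => ?_
    · exact Finset.nonempty_Ico.mpr hNn
    · exact hgq _ (hmem k (Finset.mem_Ico.mp hk).1)
  have h3 : (∑ k ∈ Finset.Ico N n, (-δ : ℝ)) = -((n - N : ℕ) * δ) := by
    rw [Finset.sum_const, Nat.card_Ico, nsmul_eq_mul]
    ring
  have h4 : (N * M : ℝ) < (n - N : ℕ) * δ := by
    have hge : ((Nat.ceil (N * M / δ) + 1 : ℕ) : ℝ) ≤ ((n - N : ℕ) : ℝ) := by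
      exact_mod_cast Nat.le_sub_of_add_le (by omega)
    have hc : (N * M / δ : ℝ) ≤ Nat.ceil (N * M / δ) := Nat.le_ceil _
    have : (N * M / δ : ℝ) + 1 ≤ ((n - N : ℕ) : ℝ) := by
      push_cast at hge; linarith
    calc (N * M : ℝ) = (N * M / δ) * δ := by field_simp
      _ < ((n - N : ℕ) : ℝ) * δ := by nlinarith
  rw [hsplit] at hz
  linarith
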